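/- Let σ > 1, z₀ ≥ 1 and w₀ > 0, and let z be a solution of the damped oscillator ODE with data (z₀, w₀). Then z(t) = z₀ + w₀(1 − e^{−t}) for all t ≥ 0; in particular z(t) ≥ 1 and Φ_σ'(z(t)) = 0 for all t ≥ 0, and |z(t) − (z₀ + w₀)| = w₀ e^{−t}, so z(t) converges exponentially to z₀ + w₀ as t → +∞. -/

import Mathlib

/-- The force `Φ_σ'` (derivative of the normalized adhesion potential with `u_* = 1`). -/
noncomputable def PhiD (σ u : ℝ) : ℝ :=
  if |u| ≤ 1 - 1/σ then 2*u
  else if 1 - 1/σ ≤ u ∧ u ≤ 1 then 2*(σ - 1)*(1 - u)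
  else if -1 ≤ u ∧ u ≤ -1 + 1/σ then -(2*(σ - 1)*(1 + u))
  else 0

lemma phiD_closed_form {σ : ℝ} (hσ : 1 < σ) (u : ℝ) :
    PhiD σ u = max (min (2*u) (2*(σ-1)*max 0 (1-u))) (-(2*(σ-1)* max 0 (1+u))) := by
  have hσ0 : 0 < σ := by linarith
  have h1σ : 0 < 1/σ := by positivity
  have h1σ1 : 1/σ < 1 := by
    rw [div_lt_one hσ0]; linarith
  have hkey : σ * (1 - 1/σ) = σ - 1 := by field_simp
  have hkey2 : σ * (-1 + 1/σ) = -σ + 1 := by field_simp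
  unfold PhiD
  split_ifs with h1 h2 h3
  · -- |u| ≤ 1 - 1/σ
    rw [abs_le] at h1
    have hm1 : σ * u ≤ σ - 1 := by
      have := mul_le_mul_of_nonneg_left h1.2 hσ0.le; linarith
    have hm2 : -(σ - 1) ≤ σ * u := by
      have := mul_le_mul_of_nonneg_left h1.1 hσ0.le
      rw [mul_neg] at this; linarith
    have hu1 : max 0 (1-u) = 1 - u := max_eq_right (by linarith [h1.2])
    have hu2 : max 0 (1+u) = 1 + u := max_eq_right (by linarith [h1.1])
    rw [hu1, hu2]
    rw [min_eq_left (by nlinarith), max_eq_left (by nlinarith)]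
  · -- 1 - 1/σ ≤ u ≤ 1
    obtain ⟨h2a, h2b⟩ := h2
    have hm1 : σ - 1 ≤ σ * u := by
      have := mul_le_mul_of_nonneg_left h2a hσ0.le; linarith
    have hu1 : max 0 (1-u) = 1 - u := max_eq_right (by linarith)
    have hu2 : max 0 (1+u) = 1 + u := max_eq_right (by nlinarith)
    rw [hu1, hu2]
    rw [min_eq_right (by nlinarith), max_eq_left (by nlinarith)]
  · -- -1 ≤ u ≤ -1 + 1/σ
    obtain ⟨h3a, h3b⟩ := h3
    have hm1 : σ * u ≤ -σ + 1 := by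
      have := mul_le_mul_of_nonneg_left h3b hσ0.le; linarith
    have hu1 : max 0 (1-u) = 1 - u := max_eq_right (by nlinarith)
    have hu2 : max 0 (1+u) = 1 + u := max_eq_right (by linarith)
    rw [hu1, hu2]
    rw [min_eq_left (by nlinarith), max_eq_right (by nlinarith)]
  · -- |u| > 1 - 1/σ and not in middle ranges
    rw [abs_le, not_and_or, not_le, not_le] at h1
    rcases h1 with h1 | h1
    · -- u < -(1 - 1/σ); together with ¬h3 we get u < -1
      have hu : u < -1 := by
        by_contra h
        push_neg at h
        exact h3 ⟨h, by linarith⟩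
      have hu2 : max 0 (1+u) = 0 := max_eq_left (by linarith)
      have hu1 : max 0 (1-u) = 1 - u := max_eq_right (by linarith)
      rw [hu1, hu2]
      rw [min_eq_left (by nlinarith), mul_zero, neg_zero,
        max_eq_right (by nlinarith)]
    · -- u > 1 - 1/σ; together with ¬h2 we get u > 1
      have hu : 1 < u := by
        by_contra h
        push_neg at h
        exact h2 ⟨by linarith, h⟩
      have hu1 : max 0 (1-u) = 0 := max_eq_left (by linarith)
      have hu2 : max 0 (1+u) = 1 + u := max_eq_right (by linarith)
      rw [hu1, hu2, mul_zero, min_eq_right (by nlinarith),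
        max_eq_left (by nlinarith)]

lemma phiD_lip {σ : ℝ} (hσ : 1 < σ) (u v : ℝ) :
    |PhiD σ u - PhiD σ v| ≤ (2*σ) * |u - v| := by
  rw [phiD_closed_form hσ u, phiD_closed_form hσ v]
  have h1 : |max 0 (1-u) - max 0 (1-v)| ≤ |u - v| := by
    have := abs_max_sub_max_le_max (0:ℝ) (1-u) 0 (1-v)
    simpa [abs_sub_comm u v] using this
  have h2 : |max 0 (1+u) - max 0 (1+v)| ≤ |u - v| := by
    have := abs_max_sub_max_le_max (0:ℝ) (1+u) 0 (1+v)
    simpa using this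
  have hσ1 : (0:ℝ) ≤ σ - 1 := by linarith
  have habs : (0:ℝ) ≤ |u - v| := abs_nonneg _
  calc |max (min (2*u) (2*(σ-1)*max 0 (1-u))) (-(2*(σ-1)* max 0 (1+u)))
        - max (min (2*v) (2*(σ-1)*max 0 (1-v))) (-(2*(σ-1)* max 0 (1+v)))|
      ≤ max |min (2*u) (2*(σ-1)*max 0 (1-u)) - min (2*v) (2*(σ-1)*max 0 (1-v))|
          |(-(2*(σ-1)* max 0 (1+u))) - (-(2*(σ-1)* max 0 (1+v)))| :=
        abs_max_sub_max_le_max _ _ _ _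
    _ ≤ (2*σ) * |u - v| := by
        apply max_le
        · calc |min (2*u) (2*(σ-1)*max 0 (1-u)) - min (2*v) (2*(σ-1)*max 0 (1-v))|
              ≤ max |2*u - 2*v| |2*(σ-1)*max 0 (1-u) - 2*(σ-1)*max 0 (1-v)| :=
                abs_min_sub_min_le_max _ _ _ _
            _ ≤ (2*σ) * |u - v| := by
                apply max_le
                · rw [show (2:ℝ)*u - 2*v = 2*(u-v) by ring, abs_mul]
                  simp only [abs_two]
                  nlinarith
                · rw [show 2*(σ-1)*max 0 (1-u) - 2*(σ-1)*max 0 (1-v)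
                    = (2*(σ-1)) * (max 0 (1-u) - max 0 (1-v)) by ring, abs_mul,
                    abs_of_nonneg (by linarith : (0:ℝ) ≤ 2*(σ-1))]
                  nlinarith
        · rw [show (-(2*(σ-1)* max 0 (1+u))) - (-(2*(σ-1)* max 0 (1+v)))
            = (2*(σ-1)) * (max 0 (1+v) - max 0 (1+u)) by ring, abs_mul,
            abs_of_nonneg (by linarith : (0:ℝ) ≤ 2*(σ-1)), abs_sub_comm]
          nlinarith

lemma phiD_continuous {σ : ℝ} (hσ : 1 < σ) : Continuous (PhiD σ) := by
  have : LipschitzWith (Real.toNNReal (2*σ)) (PhiD σ) := by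
    apply LipschitzWith.of_dist_le_mul
    intro u v
    rw [Real.dist_eq, Real.dist_eq, Real.coe_toNNReal _ (by linarith : (0:ℝ) ≤ 2*σ)]
    exact phiD_lip hσ u v
  exact this.continuous

lemma phiD_zero_of_one_le {σ u : ℝ} (hσ : 1 < σ) (hu : 1 ≤ u) : PhiD σ u = 0 := by
  have hσ0 : 0 < σ := by linarith
  have h1σ : 0 < 1/σ := by positivity
  unfold PhiD
  split_ifs with h1 h2 h3
  · rw [abs_le] at h1; linarith [h1.2]
  · have : u = 1 := le_antisymm h2.2 hu
    rw [this]; ring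
  · have h1σ1 : 1/σ < 1 := by rw [div_lt_one hσ0]; linarith
    linarith [h3.2]
  · rfl

/-- Case I: if `z₀ ≥ 1` and `w₀ > 0`, the solution of the damped
oscillator ODE is `z t = z₀ + w₀ (1 - e^{-t})`; in particular `z t ≥ 1`,
`Φ_σ'(z t) = 0`, and `|z t - (z₀ + w₀)| = w₀ e^{-t}` for all `t ≥ 0`. -/
theorem case_I (σ z₀ w₀ : ℝ) (hσ : 1 < σ) (hz₀ : 1 ≤ z₀) (hw₀ : 0 < w₀)
    (z z' z'' : ℝ → ℝ)
    (hz : ∀ t ≥ (0:ℝ), HasDerivAt z (z' t) t)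
    (hz' : ∀ t ≥ (0:ℝ), HasDerivAt z' (z'' t) t)
    (hode : ∀ t > (0:ℝ), z'' t + z' t + PhiD σ (z t) = 0)
    (h0 : z 0 = z₀) (h0' : z' 0 = w₀) :
    ∀ t ≥ (0:ℝ), z t = z₀ + w₀ * (1 - Real.exp (-t)) ∧ 1 ≤ z t ∧
      PhiD σ (z t) = 0 ∧ |z t - (z₀ + w₀)| = w₀ * Real.exp (-t) := by
  -- the candidate solution
  set y : ℝ → ℝ := fun s => z₀ + w₀ * (1 - Real.exp (-s)) with hy
  have hy_ge : ∀ s ≥ (0:ℝ), 1 ≤ y s := by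
    intro s hs
    have : Real.exp (-s) ≤ 1 := Real.exp_le_one_iff.mpr (by linarith)
    have : 0 ≤ w₀ * (1 - Real.exp (-s)) := by nlinarith
    simp only [hy]; linarith
  have hy_deriv : ∀ s : ℝ, HasDerivAt y (w₀ * Real.exp (-s)) s := by
    intro s
    have h1 : HasDerivAt (fun u : ℝ => Real.exp (-u)) (-Real.exp (-s)) s := by
      simpa [Function.comp_def] using (Real.hasDerivAt_exp (-s)).comp s (hasDerivAt_neg s)
    have h2 : HasDerivAt (fun u : ℝ => z₀ + w₀ * (1 - Real.exp (-u)))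
        (w₀ * Real.exp (-s)) s := by
      have := ((hasDerivAt_const s (1:ℝ)).sub h1).const_mul w₀
      simpa using this
    exact h2
  -- the vector field
  set v : ℝ → ℝ × ℝ → ℝ × ℝ := fun _ p => (p.2, -p.2 - PhiD σ p.1) with hv_def
  have hv : ∀ t : ℝ, LipschitzWith (Real.toNNReal (2*σ+1)) (v t) := by
    intro t
    apply LipschitzWith.of_dist_le_mul
    intro p q
    rw [Real.coe_toNNReal _ (by linarith : (0:ℝ) ≤ 2*σ+1)]
    rw [Prod.dist_eq, Prod.dist_eq]
    have hd1 : dist p.1 q.1 ≤ max (dist p.1 q.1) (dist p.2 q.2) := le_max_left _ _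
    have hd2 : dist p.2 q.2 ≤ max (dist p.1 q.1) (dist p.2 q.2) := le_max_right _ _
    have hdnn : (0:ℝ) ≤ max (dist p.1 q.1) (dist p.2 q.2) :=
      le_trans dist_nonneg hd1
    apply max_le
    · simp only [hv_def, Real.dist_eq] at *
      nlinarith
    · simp only [hv_def, Real.dist_eq] at *
      have hphi := phiD_lip hσ p.1 q.1
      calc |(-p.2 - PhiD σ p.1) - (-q.2 - PhiD σ q.1)|
          ≤ |q.2 - p.2| + |PhiD σ q.1 - PhiD σ p.1| := by
            have : (-p.2 - PhiD σ p.1) - (-q.2 - PhiD σ q.1)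
              = (q.2 - p.2) + (PhiD σ q.1 - PhiD σ p.1) := by ring
            rw [this]; exact abs_add_le _ _
        _ ≤ |p.2 - q.2| + 2*σ*|p.1 - q.1| := by
            rw [abs_sub_comm q.2 p.2, abs_sub_comm (PhiD σ q.1) (PhiD σ p.1)]
            linarith
        _ ≤ (2*σ+1) * max |p.1 - q.1| |p.2 - q.2| := by
            have h1 : |p.1 - q.1| ≤ max |p.1 - q.1| |p.2 - q.2| := le_max_left _ _
            have h2 : |p.2 - q.2| ≤ max |p.1 - q.1| |p.2 - q.2| := le_max_right _ _
            have h0 : (0:ℝ) ≤ max |p.1 - q.1| |p.2 - q.2| :=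
              le_trans (abs_nonneg _) h1
            nlinarith
  -- the two trajectories
  set f : ℝ → ℝ × ℝ := fun s => (z s, z' s) with hf_def
  set g : ℝ → ℝ × ℝ := fun s => (y s, w₀ * Real.exp (-s)) with hg_def
  -- the derivative of z' at 0 from the right is -w₀ (limit of the ODE)
  have hE : HasDerivWithinAt z' (-z' 0 - PhiD σ (z 0)) (Set.Ici 0) 0 := by
    apply hasDerivWithinAt_Ici_of_tendsto_deriv (s := Set.Ioi (0:ℝ))
    · intro x hx
      exact (hz' x (le_of_lt hx)).differentiableAt.differentiableWithinAt
    · exact (hz' 0 le_rfl).continuousAt.continuousWithinAt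
    · exact self_mem_nhdsWithin
    · have hc : ContinuousAt (fun x => -z' x - PhiD σ (z x)) 0 := by
        exact ((hz' 0 le_rfl).continuousAt.neg).sub
          ((phiD_continuous hσ).continuousAt.comp (hz 0 le_rfl).continuousAt)
      have htend : Filter.Tendsto (fun x => -z' x - PhiD σ (z x))
          (nhdsWithin 0 (Set.Ioi 0)) (nhds (-z' 0 - PhiD σ (z 0))) :=
        hc.continuousWithinAt
      apply htend.congr'
      apply eventually_nhdsWithin_of_forall
      intro x hx
      have hode' := hode x hx
      have hd : deriv z' x = z'' x := (hz' x (le_of_lt hx)).deriv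
      show -z' x - PhiD σ (z x) = deriv z' x
      rw [hd]; linarith
  -- derivative facts for f
  have hf' : ∀ s ∈ Set.Ici (0:ℝ), HasDerivWithinAt f (v s (f s)) (Set.Ici s) s := by
    intro s hs
    rcases eq_or_lt_of_le (Set.mem_Ici.mp hs) with hs0 | hs0
    · subst hs0
      exact HasDerivWithinAt.prodMk (hz 0 le_rfl).hasDerivWithinAt hE
    · have heq : z'' s = -z' s - PhiD σ (z s) := by
        have := hode s hs0
        linarith
      have : HasDerivAt f (z' s, z'' s) s :=
        (hz s (le_of_lt hs0)).prodMk (hz' s (le_of_lt hs0))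
      rw [heq] at this
      exact this.hasDerivWithinAt
  -- derivative facts for g
  have hg' : ∀ s ∈ Set.Ici (0:ℝ), HasDerivWithinAt g (v s (g s)) (Set.Ici s) s := by
    intro s hs
    have hphi : PhiD σ (y s) = 0 := phiD_zero_of_one_le hσ (hy_ge s hs)
    have hd2 : HasDerivAt (fun u => w₀ * Real.exp (-u)) (-(w₀ * Real.exp (-s))) s := by
      have h1 : HasDerivAt (fun u : ℝ => Real.exp (-u)) (-Real.exp (-s)) s := by
        simpa [Function.comp_def] using (Real.hasDerivAt_exp (-s)).comp s (hasDerivAt_neg s)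
      simpa [mul_comm, mul_assoc, mul_neg] using h1.const_mul w₀
    have : HasDerivAt g (w₀ * Real.exp (-s), -(w₀ * Real.exp (-s))) s :=
      (hy_deriv s).prodMk hd2
    have hvg : v s (g s) = (w₀ * Real.exp (-s), -(w₀ * Real.exp (-s))) := by
      simp only [hv_def, hg_def, hphi]
      ring_nf
    rw [hvg]
    exact this.hasDerivWithinAt
  -- uniqueness on every interval [0, b]
  have key : ∀ t ≥ (0:ℝ), z t = y t := by
    intro t ht
    have hset : Set.EqOn f g (Set.Icc 0 (t+1)) := by
      apply ODE_solution_unique hv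
      · intro s hs
        exact ((hz s hs.1).continuousAt.prodMk (hz' s hs.1).continuousAt).continuousWithinAt
      · intro s hs
        exact hf' s (Set.mem_Ici.mpr hs.1)
      · intro s hs
        exact ((hy_deriv s).continuousAt.prodMk
          (((Real.continuous_exp.comp continuous_neg).const_smul w₀).continuousAt)).continuousWithinAt
      · intro s hs
        exact hg' s (Set.mem_Ici.mpr hs.1)
      · simp only [hf_def, hg_def, hy, h0, h0', neg_zero, Real.exp_zero]
        norm_num
    have := hset ⟨ht, by linarith⟩
    exact congrArg Prod.fst this
  -- conclusion
  intro t ht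
  have hzt : z t = z₀ + w₀ * (1 - Real.exp (-t)) := key t ht
  have h1 : 1 ≤ z t := by rw [hzt]; exact hy_ge t ht
  refine ⟨hzt, h1, phiD_zero_of_one_le hσ h1, ?_⟩
  have : z t - (z₀ + w₀) = -(w₀ * Real.exp (-t)) := by rw [hzt]; ring
  rw [this, abs_neg, abs_of_pos (by positivity)]
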